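/- Let λ(s) be a C¹ solution on [s₀, ∞) of the Riccati inequality |λ' + λ²| ≤ h(s) with ∫ s·h(s) ds < ∞ and s·λ(s) → 1 as s → ∞. Then ∫_{s₀}^∞ |λ(s) − 1/s| ds < ∞. -/

import Mathlib

open MeasureTheory Set Filter
open scoped Topology

/-- Let `λ` be a `C¹` solution on `[s₀, ∞)` of the Riccati inequality
`|λ' + λ²| ≤ h(s)` with `∫ s·h(s) ds < ∞` and `s·λ(s) → 1` as `s → ∞`.
Then `∫_{s₀}^∞ |λ(s) − 1/s| ds < ∞`. -/
theorem riccati_integral_bound_one (s₀ : ℝ) (hs₀ : 0 < s₀)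
    (h lam lam' : ℝ → ℝ)
    (hhcont : ContinuousOn h (Ici s₀)) (hh0 : ∀ s ∈ Ici s₀, 0 ≤ h s)
    (hhint : IntegrableOn (fun s => s * h s) (Ici s₀))
    (hderiv : ∀ s ∈ Ici s₀, HasDerivAt lam (lam' s) s)
    (hcont : ContinuousOn lam' (Ici s₀))
    (hricc : ∀ s ∈ Ici s₀, |lam' s + lam s ^ 2| ≤ h s)
    (hlim : Tendsto (fun s => s * lam s) atTop (nhds 1)) :
    IntegrableOn (fun s => |lam s - 1 / s|) (Ici s₀) := by
  have hlamc : ContinuousOn lam (Ici s₀) := fun x hx =>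
    (hderiv x hx).continuousAt.continuousWithinAt
  -- the function u = s*lam s - 1
  set u : ℝ → ℝ := fun s => s * lam s - 1 with hu_def
  have hucont : ContinuousOn u (Ici s₀) :=
    (continuousOn_id.mul hlamc).sub continuousOn_const
  have hu_deriv : ∀ x ∈ Ici s₀, HasDerivAt u (lam x + x * lam' x) x := by
    intro x hx
    have := ((hasDerivAt_id x).mul (hderiv x hx)).sub_const 1
    simpa [hu_def, add_comm] using this
  -- choose S
  obtain ⟨S₁, hS₁⟩ := eventually_atTop.mp
    (hlim.eventually (Metric.ball_mem_nhds (1:ℝ) one_half_pos))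
  set S := max s₀ S₁ with hS_def
  have hSs₀ : s₀ ≤ S := le_max_left _ _
  have hS0 : (0:ℝ) < S := lt_of_lt_of_le hs₀ hSs₀
  have hu_small : ∀ s, S ≤ s → |u s| ≤ 1/2 := by
    intro s hs
    have := hS₁ s (le_trans (le_max_right _ _) hs)
    rw [Real.dist_eq] at this
    simpa [hu_def] using this.le
  clear_value u
  -- key pointwise inequality
  have hkey : ∀ x, S ≤ x → ∀ sgn : ℝ, sgn * u x = |u x| → sgn * sgn = 1 →
      sgn * (lam x + x * lam' x) ≤ -(|u x| / (2*x)) + x * h x := by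
    intro x hx sgn hsgn hsgn2
    have hx0 : (0:ℝ) < x := lt_of_lt_of_le hS0 hx
    have hxI : x ∈ Ici s₀ := le_trans hSs₀ hx
    have hus : |u x| ≤ 1/2 := hu_small x hx
    have h1u : (1:ℝ)/2 ≤ 1 + u x := by
      have := (abs_le.1 hus).1
      linarith
    have hid : lam x + x * lam' x
        = -(u x * (1 + u x)) / x + x * (lam' x + lam x ^ 2) := by
      rw [hu_def]
      field_simp
      ring
    have hr := hricc x hxI
    have hsr : sgn * (lam' x + lam x ^ 2) ≤ h x := by
      rcases le_or_gt sgn 0 with hs' | hs'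
      · nlinarith [abs_le.1 hr, neg_abs_le sgn, le_abs_self sgn, abs_nonneg (lam' x + lam x ^ 2)]
      · nlinarith [abs_le.1 hr]
    have habs : 0 ≤ |u x| := abs_nonneg _
    have hterm : sgn * (-(u x * (1 + u x)) / x) ≤ -(|u x| / (2*x)) := by
      have heq : sgn * (-(u x * (1 + u x)) / x) = -((|u x| * (1 + u x)) / x) := by
        rw [← hsgn]; ring
      rw [heq, neg_le_neg_iff, div_le_div_iff₀ (by positivity) hx0]
      nlinarith [mul_nonneg (mul_nonneg habs hx0.le) (by linarith : (0:ℝ) ≤ 2*(1 + u x) - 1)]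
    calc sgn * (lam x + x * lam' x)
        = sgn * (-(u x * (1 + u x)) / x) + sgn * (x * (lam' x + lam x ^ 2)) := by
          rw [hid]; ring
      _ ≤ -(|u x| / (2*x)) + x * h x := by
          have : sgn * (x * (lam' x + lam x ^ 2)) = x * (sgn * (lam' x + lam x ^ 2)) := by ring
          rw [this]
          have h2 : x * (sgn * (lam' x + lam x ^ 2)) ≤ x * h x :=
            mul_le_mul_of_nonneg_left hsr hx0.le
          linarith [hterm]
  -- continuity of integrands
  have habsucont : ContinuousOn (fun σ => |u σ|) (Ici s₀) := hucont.abs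
  have hIciS : Ici S ⊆ Ici s₀ := Ici_subset_Ici.2 hSs₀
  have hw_cont : ContinuousOn (fun σ => |u σ| / (2*σ)) (Ici S) := by
    apply (habsucont.mono hIciS).div (continuousOn_const.mul continuousOn_id)
    intro σ hσ
    have : (0:ℝ) < σ := lt_of_lt_of_le hS0 hσ
    show (2:ℝ) * σ ≠ 0
    positivity
  have hH_cont : ContinuousOn (fun σ => σ * h σ) (Ici s₀) := continuousOn_id.mul hhcont
  -- the main uniform bound
  set C := |u S| + ∫ σ in Ici S, σ * h σ with hC_def
  have key2 : ∀ T, S ≤ T → (∫ σ in S..T, |u σ| / (2*σ)) ≤ C := by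
    intro T hT
    set g : ℝ → ℝ := fun t => ∫ σ in S..t, |u σ| / (2*σ) with hg_def
    set B : ℝ → ℝ := fun t => |u S| + ∫ σ in S..t, σ * h σ with hB_def
    set f : ℝ → ℝ := fun t => g t + |u t| with hf_def
    have huIcc : uIcc S T = Icc S T := uIcc_of_le hT
    have hIccsub : Icc S T ⊆ Ici S := Icc_subset_Ici_self
    -- continuity of g, B, f on Icc S T
    have hgcont : ContinuousOn g (Icc S T) := by
      rw [← huIcc]
      exact intervalIntegral.continuousOn_primitive_interval
        ((hw_cont.mono (by rw [huIcc]; exact hIccsub)).integrableOn_compact (by rw [huIcc]; exact isCompact_Icc))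
    have hBcont : ContinuousOn B (Icc S T) := by
      apply continuousOn_const.add
      rw [← huIcc]
      exact intervalIntegral.continuousOn_primitive_interval
        ((hH_cont.mono (fun z hz => hIciS (by rw [huIcc] at hz; exact hIccsub hz))).integrableOn_compact
          (by rw [huIcc]; exact isCompact_Icc))
    have hfcont : ContinuousOn f (Icc S T) :=
      hgcont.add ((habsucont.mono (fun z hz => hIciS (hIccsub hz))))
    -- right derivative of B
    have hB' : ∀ x ∈ Ico S T, HasDerivWithinAt B (x * h x) (Ici x) x := by
      intro x hx
      have hxS : S ≤ x := hx.1
      have hxI : x ∈ Ici s₀ := le_trans hSs₀ hxS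
      apply HasDerivWithinAt.const_add
      apply intervalIntegral.integral_hasDerivWithinAt_right (t := Ioi x)
      · have : ContinuousOn (fun σ => σ * h σ) (uIcc S x) := by
          rw [uIcc_of_le hxS]
          exact hH_cont.mono (fun z hz => hIciS (Icc_subset_Ici_self hz))
        exact this.intervalIntegrable
      · exact AEStronglyMeasurable.stronglyMeasurableAtFilter_of_mem
          (hH_cont.aestronglyMeasurable measurableSet_Ici)
          (mem_of_superset self_mem_nhdsWithin (fun z hz => mem_Ici.2 (le_trans hxI (le_of_lt (mem_Ioi.1 hz)))))
      · exact (hH_cont x hxI).mono (fun z hz => mem_Ici.2 (le_trans hxI (le_of_lt (mem_Ioi.1 hz))))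
    -- the slope bound for f
    have bound : ∀ x ∈ Ico S T, ∀ r, x * h x < r → ∃ᶠ z in 𝓝[>] x, slope f x z < r := by
      intro x hx r hr
      have hxS : S ≤ x := hx.1
      have hx0 : (0:ℝ) < x := lt_of_lt_of_le hS0 hxS
      have hxI : x ∈ Ici s₀ := le_trans hSs₀ hxS
      -- slope of g converges
      have hg' : HasDerivWithinAt g (|u x| / (2*x)) (Ici x) x := by
        apply intervalIntegral.integral_hasDerivWithinAt_right (t := Ioi x)
        · exact ((hw_cont.mono (by rw [uIcc_of_le hxS]; exact Icc_subset_Ici_self)).intervalIntegrable)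
        · exact AEStronglyMeasurable.stronglyMeasurableAtFilter_of_mem
            (hw_cont.aestronglyMeasurable measurableSet_Ici)
            (mem_of_superset self_mem_nhdsWithin (fun z hz => mem_Ici.2 (le_trans hxS (le_of_lt (mem_Ioi.1 hz)))))
        · exact (hw_cont x hxS).mono (fun z hz => mem_Ici.2 (le_trans hxS (le_of_lt (mem_Ioi.1 hz))))
      have hgslope : Tendsto (slope g x) (𝓝[>] x) (𝓝 (|u x|/(2*x))) := by
        have := hasDerivWithinAt_iff_tendsto_slope.mp hg'
        rwa [Ici_sdiff_left] at this
      have husl : Tendsto (slope u x) (𝓝[>] x) (𝓝 (lam x + x * lam' x)) :=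
        (hasDerivAt_iff_tendsto_slope.mp (hu_deriv x hxI)).mono_left
          (nhdsWithin_mono x (fun z hz => ne_of_gt hz))
      obtain ⟨L, hL, hLle⟩ : ∃ L, Tendsto (slope (fun z => |u z|) x) (𝓝[>] x) (𝓝 L)
          ∧ L ≤ -(|u x|/(2*x)) + x * h x := by
        by_cases hux : u x = 0
        · refine ⟨|lam x + x * lam' x|, ?_, ?_⟩
          · apply husl.abs.congr'
            filter_upwards [self_mem_nhdsWithin] with z hz
            have hzx : (0:ℝ) < z - x := sub_pos.2 hz
            rw [slope_def_field, slope_def_field, hux, abs_zero, sub_zero, sub_zero, abs_div,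
              abs_of_pos hzx]
          · have h1 := hkey x hxS 1 (by simp [hux]) (by norm_num)
            have h2 := hkey x hxS (-1) (by simp [hux]) (by norm_num)
            rw [one_mul] at h1
            rw [neg_one_mul] at h2
            exact abs_le.2 ⟨by linarith, h1⟩
        · have hsgn2 : (if 0 < u x then (1:ℝ) else -1) * (if 0 < u x then (1:ℝ) else -1) = 1 := by
            split <;> norm_num
          set sgn : ℝ := if 0 < u x then 1 else -1 with hsgn_def
          have hsgn : sgn * u x = |u x| := by
            rw [hsgn_def]
            split
            · rw [one_mul, abs_of_pos ‹_›]
            · rw [neg_one_mul, abs_of_neg (lt_of_le_of_ne (not_lt.1 ‹_›) hux)]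
          refine ⟨sgn * (lam x + x * lam' x), ?_, hkey x hxS sgn hsgn hsgn2⟩
          have hcontx : ContinuousAt u x := (hu_deriv x hxI).continuousAt
          have hev : ∀ᶠ z in 𝓝 x, |u z| = sgn * u z := by
            have hball := hcontx (Metric.ball_mem_nhds (u x) (abs_pos.2 hux))
            filter_upwards [hball] with z hz
            have hd : |u z - u x| < |u x| := by
              simpa [Real.dist_eq] using hz
            rw [hsgn_def]
            rcases lt_or_gt_of_ne hux with hneg | hpos
            · rw [if_neg (not_lt.2 hneg.le), neg_one_mul, abs_of_neg]
              rw [abs_of_neg hneg] at hd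
              have := (abs_lt.1 hd).2
              linarith
            · rw [if_pos hpos, one_mul, abs_of_pos]
              rw [abs_of_pos hpos] at hd
              have := (abs_lt.1 hd).1
              linarith
          have hev' : ∀ᶠ z in 𝓝[>] x, sgn * slope u x z = slope (fun z => |u z|) x z := by
            filter_upwards [nhdsWithin_le_nhds hev] with z hz
            rw [slope_def_field, slope_def_field, hz, ← hsgn]
            ring
          exact (husl.const_mul sgn).congr' hev'
      have hfslope : Tendsto (slope f x) (𝓝[>] x) (𝓝 (|u x|/(2*x) + L)) := by
        apply (hgslope.add hL).congr'
        filter_upwards [self_mem_nhdsWithin] with z hz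
        rw [slope_def_field, slope_def_field, slope_def_field, hf_def]
        rw [← add_div]
        ring_nf
      have hlt : |u x|/(2*x) + L < r := by linarith
      exact (hfslope.eventually_lt_const hlt).frequently
    -- apply the fencing lemma
    have hfa : f S ≤ B S := by
      simp [hf_def, hg_def, hB_def, intervalIntegral.integral_same]
    have hfence := image_le_of_liminf_slope_right_le_deriv_boundary hfcont hfa hBcont hB' bound
      (right_mem_Icc.2 hT)
    have hgT : g T ≤ B T := by
      have h0 : (0:ℝ) ≤ |u T| := abs_nonneg _
      have : g T + |u T| ≤ B T := hfence
      linarith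
    have hBC : (∫ σ in S..T, σ * h σ) ≤ ∫ σ in Ici S, σ * h σ := by
      rw [intervalIntegral.integral_of_le hT]
      apply setIntegral_mono_set (hhint.mono_set hIciS)
      · exact (ae_restrict_iff' measurableSet_Ici).2 (ae_of_all _ fun σ hσ =>
          mul_nonneg (le_of_lt (lt_of_lt_of_le hS0 hσ)) (hh0 σ (hIciS hσ)))
      · exact HasSubset.Subset.eventuallyLE (fun z hz => le_of_lt hz.1)
    calc (∫ σ in S..T, |u σ| / (2*σ)) = g T := rfl
      _ ≤ B T := hgT
      _ ≤ C := by
          simp only [hB_def, hC_def]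
          exact add_le_add le_rfl hBC
  -- endgame
  have hFcont : ContinuousOn (fun σ => |lam σ - 1/σ|) (Ici s₀) := by
    apply ContinuousOn.abs
    apply hlamc.sub
    apply ContinuousOn.div continuousOn_const continuousOn_id
    intro σ hσ
    exact ne_of_gt (lt_of_lt_of_le hs₀ hσ)
  have hmain : IntegrableOn (fun σ => |lam σ - 1/σ|) (Ioi S) := by
    apply integrableOn_Ioi_of_intervalIntegral_norm_bounded (2*C) S
      (b := fun i : ℝ => max S i) (l := atTop)
    · intro i
      apply IntegrableOn.mono_set _ Ioc_subset_Icc_self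
      exact (hFcont.mono (fun z hz => le_trans hSs₀ hz.1)).integrableOn_compact isCompact_Icc
    · exact tendsto_atTop_mono (fun i => le_max_right S i) tendsto_id
    · apply Eventually.of_forall
      intro i
      have hTi : S ≤ max S i := le_max_left _ _
      have heq : (∫ x in S..max S i, ‖|lam x - 1/x|‖)
          = 2 * ∫ σ in S..max S i, |u σ|/(2*σ) := by
        rw [← intervalIntegral.integral_const_mul]
        apply intervalIntegral.integral_congr
        intro σ hσ
        rw [uIcc_of_le hTi] at hσ
        have hσ0 : (0:ℝ) < σ := lt_of_lt_of_le hS0 hσ.1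
        have hueq : lam σ - 1/σ = u σ / σ := by
          rw [hu_def]
          field_simp
        show ‖|lam σ - 1/σ|‖ = 2 * (|u σ| / (2*σ))
        rw [Real.norm_eq_abs, abs_abs, hueq, abs_div, abs_of_pos hσ0]
        field_simp
      rw [heq]
      linarith [key2 (max S i) hTi]
  have hcompact : IntegrableOn (fun σ => |lam σ - 1/σ|) (Icc s₀ S) :=
    (hFcont.mono Icc_subset_Ici_self).integrableOn_compact isCompact_Icc
  apply IntegrableOn.mono_set (hcompact.union hmain)
  intro z hz
  rcases le_or_gt z S with h' | h'
  · exact Or.inl ⟨hz, h'⟩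
  · exact Or.inr h'
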